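/- Let V be a real Hilbert space, let d ≥ 1, let B : V × V → ℝ be a bounded bilinear form that is coercive (there is μ > 0 with B(v,v) ≥ μ‖v‖² for all v ∈ V), let T : V → ℝ^d be a bounded linear map, and let c ∈ ℝ^{d×d} be a symmetric matrix. For each p ∈ ℝ^d let Q_p ∈ V be the unique element (given by the Lax–Milgram theorem) with B(v, Q_p) + (c·T(v))·p = 0 for all v ∈ V, and define R ∈ ℝ^{d×d} by pᵀ R y := −(c·y)·T(Q_p). Then for every p ∈ ℝ^d one has pᵀ R p = B(Q_p, Q_p) ≥ μ‖Q_p‖² ≥ 0; in particular pᵀ R p ≥ 0 for all p ∈ ℝ^d. -/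
import Mathlib


open Matrix

/-- Positivity of the sensitivity matrix: with `B` a bounded coercive bilinear form on a real
Hilbert space `V`, `T : V → ℝ^d` bounded linear, `c` a symmetric matrix, `Q p` the (unique, by
Lax–Milgram) solution of `B(v, Q p) + (c·T v)·p = 0` for all `v`, and `R` defined by
`pᵀ R y = −(c·y)·T(Q p)`, one has `pᵀ R p = B(Q p, Q p) ≥ μ‖Q p‖² ≥ 0` for every `p`. -/
theorem stmt_18 {V : Type*} [NormedAddCommGroup V] [InnerProductSpace ℝ V] [CompleteSpace V]
    (d : ℕ) (hd : 1 ≤ d)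
    (B : V →L[ℝ] V →L[ℝ] ℝ) (μ : ℝ) (hμ : 0 < μ)
    (hcoercive : ∀ v : V, B v v ≥ μ * ‖v‖ ^ 2)
    (T : V →L[ℝ] (Fin d → ℝ))
    (c : Matrix (Fin d) (Fin d) ℝ) (hc : cᵀ = c)
    (Q : (Fin d → ℝ) → V)
    (hQ : ∀ (p : Fin d → ℝ) (v : V), B v (Q p) + (c *ᵥ T v) ⬝ᵥ p = 0)
    (R : Matrix (Fin d) (Fin d) ℝ)
    (hR : ∀ p y : Fin d → ℝ, p ⬝ᵥ R *ᵥ y = -((c *ᵥ y) ⬝ᵥ T (Q p))) :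
    ∀ p : Fin d → ℝ,
      p ⬝ᵥ R *ᵥ p = B (Q p) (Q p) ∧
      B (Q p) (Q p) ≥ μ * ‖Q p‖ ^ 2 ∧
      0 ≤ p ⬝ᵥ R *ᵥ p := by
  intro p
  have hsym : (c *ᵥ p) ⬝ᵥ T (Q p) = (c *ᵥ T (Q p)) ⬝ᵥ p := by
    rw [dotProduct_comm, dotProduct_mulVec, ← mulVec_transpose, hc]
  have hmain : p ⬝ᵥ R *ᵥ p = B (Q p) (Q p) := by
    have h := hQ p (Q p)
    rw [hR p p, hsym]
    linarith
  have hco := hcoercive (Q p)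
  have hnn : 0 ≤ μ * ‖Q p‖ ^ 2 := by positivity
  exact ⟨hmain, hco, by rw [hmain]; linarith⟩
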